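/- Let n and s be positive integers with 1 ≤ s < n and gcd(n, s+1) = 1, and let F(X) = X^{2^n − 2^s} on F_{2^n}. Let a, b ∈ F_{2^n}^* with a ≠ b and a·b^{2^s} + a^{2^s}·b ≠ 0. Set B = b/a and A = (B^{2^{n−s}} + B)/(B^2 + B) (the denominator is nonzero since B ≠ 0, 1). Then ∇_F(a,b) = #{Y ∈ F_{2^n} : Y^{2^{n−s}} + A·Y^2 + (1+A)·Y = 0} − 4; in particular the set of roots of this linearized trinomial contains the four distinct elements 0, 1, B, B+1, none of which yields a solution of the original second-order zero differential equation. -/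

import Mathlib

open Finset

/-- Second-order zero differential spectrum of `f` at `(a, b)`:
the number of `X` with `f(X+a+b) - f(X+b) - f(X+a) + f(X) = 0`. -/
def sozdSpec {K : Type*} [Field K] [Fintype K] [DecidableEq K] (f : K → K) (a b : K) : ℕ :=
  (Finset.univ.filter fun X : K => f (X + a + b) - f (X + b) - f (X + a) + f X = 0).card

/-- DDT entry of `f` at `(a, b)`: the number of `X` with `f(X+a) - f(X) = b`. -/
def ddtEntry {K : Type*} [Field K] [Fintype K] [DecidableEq K] (f : K → K) (a b : K) : ℕ :=
  (Finset.univ.filter fun X : K => f (X + a) - f X = b).card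

/-- Differential uniformity of `f`: `max {Δ_f(a,b) : a ≠ 0, b}`. -/
def diffUnif {K : Type*} [Field K] [Fintype K] [DecidableEq K] (f : K → K) : ℕ :=
  Finset.sup ((Finset.univ.filter fun a : K => a ≠ 0) ×ˢ Finset.univ)
    fun ab => ddtEntry f ab.1 ab.2

/-- Second-order zero differential uniformity (odd characteristic):
`max {∇_f(a,b) : a ≠ 0, b ≠ 0}`. -/
def sozdUnifOdd {K : Type*} [Field K] [Fintype K] [DecidableEq K] (f : K → K) : ℕ :=
  Finset.sup ((Finset.univ.filter fun a : K => a ≠ 0) ×ˢ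
      (Finset.univ.filter fun b : K => b ≠ 0))
    fun ab => sozdSpec f ab.1 ab.2

private lemma gcd_two_pow_sub_one {u v : ℕ} (hu : 0 < u) (h : Nat.gcd u v = 1) :
    Nat.gcd (2 ^ u - 1) (2 ^ v - 1) = 1 := by
  set d := Nat.gcd (2 ^ u - 1) (2 ^ v - 1) with hd
  have key : ∀ w : ℕ, d ∣ 2 ^ w - 1 → (2 : ZMod d) ^ w = 1 := by
    intro w hw
    have h1 : ((2 ^ w - 1 : ℕ) : ZMod d) = 0 := (ZMod.natCast_eq_zero_iff _ _).mpr hw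
    have h3 : (2 ^ w : ℕ) = (2 ^ w - 1) + 1 := by
      have : 1 ≤ 2 ^ w := Nat.one_le_two_pow
      omega
    calc (2 : ZMod d) ^ w = ((2 ^ w : ℕ) : ZMod d) := by push_cast; ring
      _ = ((2 ^ w - 1 : ℕ) : ZMod d) + 1 := by rw [h3]; push_cast; ring
      _ = 1 := by rw [h1, zero_add]
  have hu1 := key u (hd ▸ Nat.gcd_dvd_left _ _)
  have hv1 := key v (hd ▸ Nat.gcd_dvd_right _ _)
  have hone : (2 : ZMod d) ^ Nat.gcd u v = 1 := pow_gcd_eq_one.mpr ⟨hu1, hv1⟩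
  rw [h, pow_one] at hone
  have h1z : ((1 : ℕ) : ZMod d) = 0 := by
    push_cast
    linear_combination hone
  have hdvd : d ∣ 1 := (ZMod.natCast_eq_zero_iff _ _).mp h1z
  exact Nat.eq_one_of_dvd_one hdvd

/-- For `F(X) = X^{2^n - 2^s}` over `F_{2^n}` with `gcd(n, s+1) = 1`, `a, b ≠ 0`,
`a ≠ b`, and `a·b^{2^s} + a^{2^s}·b ≠ 0`: with `B = b/a` and
`A = (B^{2^{n-s}} + B)/(B² + B)`, the value `∇_F(a,b)` is the number of roots of the
linearized trinomial `Y^{2^{n-s}} + A·Y² + (1+A)·Y` minus `4`; the root set contains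
the four distinct elements `0, 1, B, B+1`, none of which yields a solution of the
original second-order zero differential equation. -/
theorem sozd_inverse_like_main_case
    {n s : ℕ} (hs : 1 ≤ s) (hsn : s < n) (hgcd : Nat.gcd n (s + 1) = 1)
    {K : Type*} [Field K] [Fintype K] [DecidableEq K] [CharP K 2]
    (hcard : Fintype.card K = 2 ^ n)
    (a b : K) (ha : a ≠ 0) (hb : b ≠ 0) (hab : a ≠ b)
    (hnd : a * b ^ 2 ^ s + a ^ 2 ^ s * b ≠ 0)
    (B : K) (hB : B = b / a)
    (A : K) (hA : A = (B ^ 2 ^ (n - s) + B) / (B ^ 2 + B))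
    (R : Finset K)
    (hR : R = Finset.univ.filter fun Y : K =>
      Y ^ 2 ^ (n - s) + A * Y ^ 2 + (1 + A) * Y = 0) :
    ({0, 1, B, B + 1} : Finset K) ⊆ R ∧
    ({0, 1, B, B + 1} : Finset K).card = 4 ∧
    (∀ X ∈ ({0, a, b, a + b} : Finset K),
      (X + a + b) ^ (2 ^ n - 2 ^ s) - (X + b) ^ (2 ^ n - 2 ^ s) -
        (X + a) ^ (2 ^ n - 2 ^ s) + X ^ (2 ^ n - 2 ^ s) ≠ 0) ∧
    sozdSpec (fun X : K => X ^ (2 ^ n - 2 ^ s)) a b = R.card - 4 := by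
  classical
  haveI : Fact (Nat.Prime 2) := ⟨Nat.prime_two⟩
  set r : ℕ := 2 ^ (n - s) with hrdef
  set q : ℕ := 2 ^ s with hqdef
  set N : ℕ := 2 ^ n with hNdef
  set e : ℕ := N - q with hedef
  -- numeric facts
  have hq1 : 1 ≤ q := Nat.one_le_two_pow
  have hqN : q < N := Nat.pow_lt_pow_right one_lt_two hsn
  have hrpos : 0 < r := Nat.pow_pos (by norm_num)
  have hr2 : 2 ≤ r := by
    calc 2 = 2 ^ 1 := rfl
    _ ≤ 2 ^ (n - s) := Nat.pow_le_pow_right (by norm_num) (by omega)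
  have he0 : e ≠ 0 := by omega
  have hqr : q * r = N := by rw [hqdef, hrdef, hNdef, ← pow_add]; congr 1; omega
  -- char two facts
  have htwo : (2 : K) = 0 := CharTwo.two_eq_zero
  have hadd : ∀ x : K, x + x = 0 := CharTwo.add_self_eq_zero
  have hsub : ∀ x y : K, x - y = x + y := CharTwo.sub_eq_add
  have hne2 : ∀ x y : K, x + y = 0 → x = y := by
    intro x y h
    linear_combination h - y * htwo
  have frobq : ∀ x y : K, (x + y) ^ q = x ^ q + y ^ q := fun x y => add_pow_char_pow ..
  have frobr : ∀ x y : K, (x + y) ^ r = x ^ r + y ^ r := fun x y => add_pow_char_pow ..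
  have hcardK : ∀ t : K, t ^ N = t := fun t => hcard ▸ FiniteField.pow_card t
  have powA : ∀ t : K, (t ^ e) ^ r = t ^ (r - 1) := by
    intro t
    rw [← pow_mul]
    have hmul : e * r = N * (r - 1) := by
      rw [hedef, Nat.sub_mul, hqr, Nat.mul_sub, mul_one]
    rw [hmul, pow_mul, hcardK]
  -- basic nonzero facts
  have habne : a + b ≠ 0 := fun h => hab (hne2 a b h)
  have hB0 : B ≠ 0 := by rw [hB]; exact div_ne_zero hb ha
  have hB1 : B ≠ 1 := by
    rw [hB]
    intro h
    exact hab ((div_eq_one_iff_eq ha).mp h).symm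
  have hB10 : B + 1 ≠ 0 := fun h => hB1 (hne2 B 1 h)
  have hBden : B ^ 2 + B ≠ 0 := by
    intro h
    have h' : B * (B + 1) = 0 := by linear_combination h
    rcases mul_eq_zero.mp h' with h' | h'
    · exact hB0 h'
    · exact hB10 h'
  have habB : a * B = b := by rw [hB]; field_simp
  have hAd : A * (B ^ 2 + B) = B ^ r + B := by
    rw [hA]; field_simp
  have hBr : B ^ r = A * (B ^ 2 + B) + B := by
    linear_combination -hAd - B * htwo
  -- Part 1 : subset
  have h0R : (0 : K) ∈ R := by
    rw [hR, mem_filter]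
    refine ⟨mem_univ _, ?_⟩
    rw [zero_pow hrpos.ne']
    ring
  have h1R : (1 : K) ∈ R := by
    rw [hR, mem_filter]
    refine ⟨mem_univ _, ?_⟩
    rw [one_pow]
    linear_combination (1 + A) * htwo
  have hBR : B ∈ R := by
    rw [hR, mem_filter]
    refine ⟨mem_univ _, ?_⟩
    linear_combination -hAd + (A * B ^ 2 + A * B) * htwo
  have hB1R : B + 1 ∈ R := by
    rw [hR, mem_filter]
    refine ⟨mem_univ _, ?_⟩
    rw [frobr B 1, one_pow]
    linear_combination -hAd + (A * B ^ 2 + 2 * A * B + A + 1) * htwo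
  have hsubset : ({0, 1, B, B + 1} : Finset K) ⊆ R := by
    intro x hx
    simp only [mem_insert, mem_singleton] at hx
    rcases hx with rfl | rfl | rfl | rfl
    · exact h0R
    · exact h1R
    · exact hBR
    · exact hB1R
  -- Part 2 : card 4
  have hB11 : B + 1 ≠ 1 := fun h => hB0 (by linear_combination h)
  have hcard4 : ({0, 1, B, B + 1} : Finset K).card = 4 := by
    rw [card_insert_of_notMem, card_insert_of_notMem, card_insert_of_notMem, card_singleton]
    · simp only [mem_singleton]
      intro h
      exact one_ne_zero (α := K) (by linear_combination -h)
    · simp only [mem_insert, mem_singleton]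
      push_neg
      exact ⟨fun h => hB1 h.symm, fun h => hB11 h.symm⟩
    · simp only [mem_insert, mem_singleton]
      push_neg
      refine ⟨zero_ne_one, fun h => hB0 h.symm, fun h => hB10 h.symm⟩
  -- Part 3 : no trivial solutions
  have hqe : ∀ t : K, t ^ e * t ^ q = t := by
    intro t
    rw [← pow_add, show e + q = N from by omega]
    exact hcardK t
  have hqe' : (a + b) ^ e * (a ^ q + b ^ q) = a + b := by
    rw [← frobq]; exact hqe (a + b)
  have key3 : a ^ e + b ^ e + (a + b) ^ e ≠ 0 := by
    intro h0
    have hmul : (a ^ e + b ^ e + (a + b) ^ e) * (a ^ q * b ^ q * (a ^ q + b ^ q)) =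
        a * (b ^ q) ^ 2 + (a ^ q) ^ 2 * b := by
      linear_combination (b ^ q * (a ^ q + b ^ q)) * hqe a + (a ^ q * (a ^ q + b ^ q)) * hqe b +
        (a ^ q * b ^ q) * hqe' + (a ^ q * b ^ q * (a + b)) * htwo
    have hz : a * (b ^ q) ^ 2 + (a ^ q) ^ 2 * b = 0 := by
      rw [← hmul, h0, zero_mul]
    set z : K := a / b with hzdef
    have hzne : z ≠ 0 := div_ne_zero ha hb
    have hzz : z ^ (2 * q) = z := by
      rw [hzdef, div_pow, div_eq_div_iff (pow_ne_zero _ hb) hb]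
      rw [show 2 * q = q * 2 from mul_comm 2 q, pow_mul, pow_mul]
      linear_combination hz - a * (b ^ q) ^ 2 * htwo
    have hzpow : z ^ (2 * q - 1) = 1 := by
      have h1 : z ^ (2 * q - 1) * z = 1 * z := by
        rw [← pow_succ, show 2 * q - 1 + 1 = 2 * q from by omega, hzz, one_mul]
      exact mul_right_cancel₀ hzne h1
    have hzcard : z ^ (N - 1) = 1 := by
      rw [← hcard]
      exact FiniteField.pow_card_sub_one_eq_one z hzne
    have hgcd1 : Nat.gcd (2 * q - 1) (N - 1) = 1 := by
      rw [show 2 * q - 1 = 2 ^ (s + 1) - 1 from by rw [hqdef, pow_succ]; omega, hNdef]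
      exact gcd_two_pow_sub_one (by omega) (by rw [Nat.gcd_comm]; exact hgcd)
    have hone : z ^ Nat.gcd (2 * q - 1) (N - 1) = 1 := pow_gcd_eq_one.mpr ⟨hzpow, hzcard⟩
    rw [hgcd1, pow_one] at hone
    rw [hzdef] at hone
    exact hab ((div_eq_one_iff_eq hb).mp hone)
  have bullet3 : ∀ X ∈ ({0, a, b, a + b} : Finset K),
      (X + a + b) ^ e - (X + b) ^ e - (X + a) ^ e + X ^ e ≠ 0 := by
    intro X hX
    simp only [mem_insert, mem_singleton] at hX
    rcases hX with h | h | h | h <;> rw [h]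
    · intro h
      simp only [hsub, zero_add, zero_pow he0, add_zero] at h
      exact key3 (by linear_combination h)
    · intro h
      simp only [hsub] at h
      rw [show a + a + b = b from by linear_combination a * htwo, hadd a,
        zero_pow he0] at h
      exact key3 (by linear_combination h)
    · intro h
      simp only [hsub] at h
      rw [show b + a + b = a from by linear_combination b * htwo, hadd b,
        zero_pow he0] at h
      exact key3 (by linear_combination h)
    · intro h
      simp only [hsub] at h
      rw [show a + b + a + b = 0 from by linear_combination (a + b) * htwo,
        show a + b + b = a from by linear_combination b * htwo,
        show a + b + a = b from by linear_combination a * htwo,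
        zero_pow he0] at h
      exact key3 (by linear_combination h)
  -- main equivalence
  have keyiff : ∀ X : K,
      ((X + a + b) ^ e - (X + b) ^ e - (X + a) ^ e + X ^ e = 0) ↔
        (X / a ∈ R ∧ X / a ∉ ({0, 1, B, B + 1} : Finset K)) := by
    intro X
    by_cases hXtriv : X = 0 ∨ X = a ∨ X = b ∨ X = a + b
    · apply iff_of_false
      · exact bullet3 X (by simp only [mem_insert, mem_singleton]; exact hXtriv)
      · rintro ⟨-, hnotin⟩
        apply hnotin
        simp only [mem_insert, mem_singleton]
        rcases hXtriv with rfl | rfl | rfl | rfl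
        · left; exact zero_div a
        · right; left; exact div_self ha
        · right; right; left; exact hB.symm
        · right; right; right
          rw [add_div, div_self ha, hB]
          ring
    · push_neg at hXtriv
      obtain ⟨hX0, hXa, hXb, hXab⟩ := hXtriv
      have hXa' : X + a ≠ 0 := fun h => hXa (hne2 X a h)
      have hXb' : X + b ≠ 0 := fun h => hXb (hne2 X b h)
      have hXab' : X + a + b ≠ 0 := fun h => hXab (hne2 X (a + b) (by linear_combination h))
      set y : K := X / a with hydef
      have hXy : X = a * y := by rw [hydef]; field_simp
      have hyT : y ∉ ({0, 1, B, B + 1} : Finset K) := by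
        simp only [mem_insert, mem_singleton]
        push_neg
        refine ⟨?_, ?_, ?_, ?_⟩
        · intro h; exact hX0 (by rw [hXy, h, mul_zero])
        · intro h; exact hXa (by rw [hXy, h, mul_one])
        · intro h; exact hXb (by rw [hXy, h, habB])
        · intro h
          apply hXab
          rw [hXy, h]
          linear_combination habB
      have hDE : (X * (X + a) * (X + b) * (X + a + b)) *
          ((X + a + b) ^ (r - 1) + (X + b) ^ (r - 1) + (X + a) ^ (r - 1) + X ^ (r - 1)) =
          X ^ r * ((X + a) * (X + b) * (X + a + b)) +
          (X + a) ^ r * (X * (X + b) * (X + a + b)) +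
          (X + b) ^ r * (X * (X + a) * (X + a + b)) +
          (X + a + b) ^ r * (X * (X + a) * (X + b)) := by
        obtain ⟨r', hr'⟩ : ∃ r', r = r' + 1 := ⟨r - 1, by omega⟩
        rw [hr', Nat.add_sub_cancel]
        ring
      have hE : X ^ r * ((X + a) * (X + b) * (X + a + b)) +
          (X + a) ^ r * (X * (X + b) * (X + a + b)) +
          (X + b) ^ r * (X * (X + a) * (X + a + b)) +
          (X + a + b) ^ r * (X * (X + a) * (X + b)) =
          a ^ r * a * (b ^ 2 + a * b) * (y ^ r + A * y ^ 2 + (1 + A) * y) := by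
        have hfr3 : (X + a + b) ^ r = X ^ r + a ^ r + b ^ r := by
          rw [frobr (X + a) b, frobr X a]
        have hXr : X ^ r = a ^ r * y ^ r := by rw [hXy, mul_pow]
        have hbr : b ^ r = a ^ r * B ^ r := by rw [← habB, mul_pow]
        rw [hfr3, frobr X b, frobr X a, hXr, hbr, hBr, hXy, ← habB]
        linear_combination (y * a^3 * y ^ r * a ^ r + y * a^3 * B * a ^ r +
          3 * y * a^3 * B * y ^ r * a ^ r + y * a^3 * B^2 * a ^ r +
          y * a^3 * B^2 * y ^ r * a ^ r + y * a^3 * B^2 * A * a ^ r +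
          y * a^3 * B^3 * A * a ^ r + y^2 * a^3 * a ^ r +
          3 * y^2 * a^3 * y ^ r * a ^ r + 3 * y^2 * a^3 * B * a ^ r +
          3 * y^2 * a^3 * B * y ^ r * a ^ r + y^2 * a^3 * B * A * a ^ r +
          y^2 * a^3 * B^2 * a ^ r + 2 * y^2 * a^3 * B^2 * A * a ^ r +
          y^2 * a^3 * B^3 * A * a ^ r + y^3 * a^3 * a ^ r +
          2 * y^3 * a^3 * y ^ r * a ^ r + y^3 * a^3 * B * a ^ r +
          y^3 * a^3 * B * A * a ^ r + y^3 * a^3 * B^2 * A * a ^ r) * htwo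
      have hDne : X * (X + a) * (X + b) * (X + a + b) ≠ 0 :=
        mul_ne_zero (mul_ne_zero (mul_ne_zero hX0 hXa') hXb') hXab'
      have hCne : a ^ r * a * (b ^ 2 + a * b) ≠ 0 := by
        refine mul_ne_zero (mul_ne_zero (pow_ne_zero _ ha) ha) ?_
        intro h
        have h' : b * (b + a) = 0 := by linear_combination h
        rcases mul_eq_zero.mp h' with h'' | h''
        · exact hb h''
        · exact habne (by linear_combination h'')
      have hSrTri : ((X + a + b) ^ (r - 1) + (X + b) ^ (r - 1) + (X + a) ^ (r - 1) +
          X ^ (r - 1) = 0) ↔ (y ^ r + A * y ^ 2 + (1 + A) * y = 0) := by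
        constructor
        · intro hSr
          have hz : a ^ r * a * (b ^ 2 + a * b) * (y ^ r + A * y ^ 2 + (1 + A) * y) = 0 := by
            rw [← hE, ← hDE, hSr, mul_zero]
          exact (mul_eq_zero.mp hz).resolve_left hCne
        · intro hTri
          have hz : (X * (X + a) * (X + b) * (X + a + b)) *
              ((X + a + b) ^ (r - 1) + (X + b) ^ (r - 1) + (X + a) ^ (r - 1) +
                X ^ (r - 1)) = 0 := by
            rw [hDE, hE, hTri, mul_zero]
          exact (mul_eq_zero.mp hz).resolve_left hDne
      have hplus : (X + a + b) ^ e - (X + b) ^ e - (X + a) ^ e + X ^ e =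
          (X + a + b) ^ e + (X + b) ^ e + (X + a) ^ e + X ^ e := by
        rw [hsub, hsub]
      have hpow : ((X + a + b) ^ e + (X + b) ^ e + (X + a) ^ e + X ^ e) ^ r =
          (X + a + b) ^ (r - 1) + (X + b) ^ (r - 1) + (X + a) ^ (r - 1) + X ^ (r - 1) := by
        rw [frobr, frobr, frobr, powA, powA, powA, powA]
      rw [hR, mem_filter]
      simp only [mem_univ, true_and]
      rw [hplus]
      constructor
      · intro hS
        refine ⟨hSrTri.mp ?_, hyT⟩
        rw [← hpow, hS, zero_pow hrpos.ne']
      · rintro ⟨hTri, -⟩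
        have hz : ((X + a + b) ^ e + (X + b) ^ e + (X + a) ^ e + X ^ e) ^ r = 0 := by
          rw [hpow]
          exact hSrTri.mpr hTri
        exact (pow_eq_zero_iff hrpos.ne').mp hz
  -- final assembly
  refine ⟨hsubset, hcard4, bullet3, ?_⟩
  have himg : (Finset.univ.filter fun X : K =>
      (X + a + b) ^ e - (X + b) ^ e - (X + a) ^ e + X ^ e = 0) =
      (R \ ({0, 1, B, B + 1} : Finset K)).image (fun y => a * y) := by
    ext X
    simp only [mem_filter, mem_univ, true_and, mem_image, mem_sdiff]
    constructor
    · intro h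
      obtain ⟨h1, h2⟩ := (keyiff X).mp h
      exact ⟨X / a, ⟨h1, h2⟩, by field_simp⟩
    · rintro ⟨y0, ⟨hyR, hyT⟩, rfl⟩
      apply (keyiff (a * y0)).mpr
      rw [show a * y0 / a = y0 from by field_simp]
      exact ⟨hyR, hyT⟩
  have hcount : sozdSpec (fun X : K => X ^ e) a b =
      ((R \ ({0, 1, B, B + 1} : Finset K)).image (fun y => a * y)).card := by
    rw [sozdSpec, himg]
  rw [hcount, Finset.card_image_of_injective _ (mul_right_injective₀ ha),
    Finset.card_sdiff_of_subset hsubset, hcard4]
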